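/- Let Z, U be Hilbert spaces, T(t) a strongly continuous semigroup on Z, B : U → Z bounded linear, and suppose the controllability map G_{τδ} u = ∫_{τ−δ}^{τ} T(τ−s) B u(s) ds has dense range for every 0 < δ < τ. Let z : [0,τ] → Z and perturbation data be such that for a fixed control u on [0, τ−δ] the mild solution z^{δ,α} with terminal control u_α satisfies ‖z^{δ,α}(τ) − y^{δ,α}(τ)‖ ≤ δ · C(K, a, b, ρ, M) for a constant independent of α, where y^{δ,α}(τ) = T(δ) z(τ−δ) + G_{τδ} u_α and u_α = G*_{τδ}(αI + Q_{τδ})^{-1}(z_1 − T(δ) z(τ−δ)). Then for every ε > 0 there exist δ > 0 and α > 0 such that ‖z^{δ,α}(τ) − z_1‖ < ε. -/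

import Mathlib

open scoped InnerProductSpace Topology

section Aux

variable {H Z : Type*} [NormedAddCommGroup H] [InnerProductSpace ℝ H] [CompleteSpace H]
  [NormedAddCommGroup Z] [InnerProductSpace ℝ Z] [CompleteSpace Z]

lemma adjoint_injective_of_denseRange (G : H →L[ℝ] Z) (h : DenseRange G)
    {x : Z} (hx : ContinuousLinearMap.adjoint G x = 0) : x = 0 := by
  have key : ∀ y : Z, ⟪x, y⟫_ℝ = 0 := by
    intro y
    refine h.induction_on y (isClosed_eq (continuous_const.inner continuous_id) continuous_const) ?_
    intro a
    rw [← ContinuousLinearMap.adjoint_inner_left, hx, inner_zero_left]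
  have := key x
  simpa [inner_self_eq_zero] using this

lemma inner_comp_adjoint_self (G : H →L[ℝ] Z) (x : Z) :
    ⟪G (ContinuousLinearMap.adjoint G x), x⟫_ℝ = ‖ContinuousLinearMap.adjoint G x‖ ^ 2 := by
  have h := ContinuousLinearMap.adjoint_inner_left
    (ContinuousLinearMap.adjoint G) x (ContinuousLinearMap.adjoint G x)
  rw [ContinuousLinearMap.adjoint_adjoint] at h
  rw [h, real_inner_self_eq_norm_sq]

lemma denseRange_comp_adjoint (G : H →L[ℝ] Z) (h : DenseRange G) :
    DenseRange (G ∘L ContinuousLinearMap.adjoint G) := by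
  have htop : (LinearMap.range (G ∘L ContinuousLinearMap.adjoint G).toLinearMap).topologicalClosure = ⊤ := by
    rw [Submodule.topologicalClosure_eq_top_iff, Submodule.eq_bot_iff]
    intro x hx
    have hxx : ⟪(G ∘L ContinuousLinearMap.adjoint G) x, x⟫_ℝ = 0 :=
      hx _ ⟨x, rfl⟩
    have h2 : ‖ContinuousLinearMap.adjoint G x‖ ^ 2 = 0 := by
      rw [← inner_comp_adjoint_self G x]; exact hxx
    exact adjoint_injective_of_denseRange G h (by
      have := pow_eq_zero_iff (n := 2) (by norm_num) |>.mp h2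
      exact norm_eq_zero.mp this)
  have hd : Dense ((LinearMap.range (G ∘L ContinuousLinearMap.adjoint G).toLinearMap) : Set Z) :=
    Submodule.dense_iff_topologicalClosure_eq_top.mpr htop
  simpa [DenseRange, LinearMap.coe_range, ContinuousLinearMap.coe_comp'] using hd

/-- Resolvent bound: if `Rα` is a right inverse witness of `α•1 + G G*` with `α > 0`, then
`α‖Rα y‖ ≤ ‖y‖`. -/
lemma resolvent_bound (G : H →L[ℝ] Z) {α : ℝ} (hα : 0 < α) (Rα : Z →L[ℝ] Z)
    (hinv : (α • (1 : Z →L[ℝ] Z) + G ∘L ContinuousLinearMap.adjoint G) ∘L Rα = 1)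
    (y : Z) : α * ‖Rα y‖ ≤ ‖y‖ := by
  have hxy : α • Rα y + G (ContinuousLinearMap.adjoint G (Rα y)) = y := by
    have := congrArg (fun (A : Z →L[ℝ] Z) => A y) hinv
    simpa [ContinuousLinearMap.comp_apply, ContinuousLinearMap.add_apply,
      ContinuousLinearMap.smul_apply] using this
  have hinner : ⟪y, Rα y⟫_ℝ
      = α * ‖Rα y‖ ^ 2 + ‖ContinuousLinearMap.adjoint G (Rα y)‖ ^ 2 := by
    nth_rewrite 1 [← hxy]
    rw [inner_add_left, real_inner_smul_left, real_inner_self_eq_norm_sq,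
      inner_comp_adjoint_self G (Rα y)]
  have h1 : α * ‖Rα y‖ ^ 2 ≤ ⟪y, Rα y⟫_ℝ := by
    rw [hinner]
    nlinarith [sq_nonneg ‖ContinuousLinearMap.adjoint G (Rα y)‖]
  have h2 : ⟪y, Rα y⟫_ℝ ≤ ‖y‖ * ‖Rα y‖ := real_inner_le_norm y (Rα y)
  rcases eq_or_ne (Rα y) 0 with hx0 | hx0
  · simp [hx0, norm_nonneg]
  · have hxpos : 0 < ‖Rα y‖ := norm_pos_iff.mpr hx0
    nlinarith

/-- Key convergence: `G G* (αI + G G*)⁻¹ v → v` as `α → 0⁺`, from density of the range. -/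
lemma key_convergence (G : H →L[ℝ] Z) (hdense : DenseRange G) (R : ℝ → Z →L[ℝ] Z)
    (hR : ∀ α : ℝ, 0 < α →
      (R α) ∘L (α • (1 : Z →L[ℝ] Z) + G ∘L ContinuousLinearMap.adjoint G) = 1 ∧
      (α • (1 : Z →L[ℝ] Z) + G ∘L ContinuousLinearMap.adjoint G) ∘L (R α) = 1)
    (v : Z) : ∀ ε : ℝ, 0 < ε → ∃ α > (0 : ℝ),
      ‖G (ContinuousLinearMap.adjoint G (R α v)) - v‖ < ε := by
  intro ε hε
  have hQd : DenseRange (G ∘L ContinuousLinearMap.adjoint G) :=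
    denseRange_comp_adjoint G hdense
  obtain ⟨w, hw⟩ : ∃ w : Z, ‖G (ContinuousLinearMap.adjoint G w) - v‖ < ε / 2 := by
    have : v ∈ closure (Set.range (G ∘L ContinuousLinearMap.adjoint G)) := hQd v
    rw [Metric.mem_closure_iff] at this
    obtain ⟨b, ⟨w, rfl⟩, hb⟩ := this (ε / 2) (by positivity)
    exact ⟨w, by rw [← dist_eq_norm, dist_comm]; exact hb⟩
  obtain ⟨α, hαpos, hαw⟩ : ∃ α > (0 : ℝ), 2 * (α * ‖w‖) < ε / 2 := by
    refine ⟨ε / (8 * (‖w‖ + 1)), by positivity, ?_⟩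
    rw [div_mul_eq_mul_div]
    have h0 : (0:ℝ) < 8 * (‖w‖ + 1) := by positivity
    rw [← sub_pos]
    have : ε / 2 - 2 * (ε * ‖w‖ / (8 * (‖w‖ + 1)))
        = ε * (2 * ‖w‖ + 4) / (8 * (‖w‖ + 1)) := by field_simp; ring
    rw [this]
    positivity
  obtain ⟨hRl, hRr⟩ := hR α hαpos
  refine ⟨α, hαpos, ?_⟩
  -- From the right inverse: G G* (R α v) = v - α • R α v
  have hQR : G (ContinuousLinearMap.adjoint G (R α v)) - v = -(α • R α v) := by
    have h0 := congrArg (fun (A : Z →L[ℝ] Z) => A v) hRr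
    simp only [ContinuousLinearMap.comp_apply, ContinuousLinearMap.add_apply,
      ContinuousLinearMap.smul_apply, ContinuousLinearMap.one_apply] at h0
    have h2 : G (ContinuousLinearMap.adjoint G (R α v)) = v - α • R α v :=
      eq_sub_of_add_eq' h0
    rw [h2]; abel
  -- From the left inverse: R α (G G* w) = w - α • R α w
  have hRQ : R α (G (ContinuousLinearMap.adjoint G w)) = w - α • R α w := by
    have h0 := congrArg (fun (A : Z →L[ℝ] Z) => A w) hRl
    simp only [ContinuousLinearMap.comp_apply, ContinuousLinearMap.add_apply,
      ContinuousLinearMap.smul_apply, ContinuousLinearMap.one_apply, map_add, map_smul] at h0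
    exact eq_sub_of_add_eq' h0
  have hres : ∀ y : Z, α * ‖R α y‖ ≤ ‖y‖ := fun y => resolvent_bound G hαpos (R α) hRr y
  rw [hQR, norm_neg]
  have hsplit : α • R α v =
      α • R α (v - G (ContinuousLinearMap.adjoint G w))
        + α • R α (G (ContinuousLinearMap.adjoint G w)) := by
    rw [← smul_add, ← map_add, sub_add_cancel]
  have h1 : ‖α • R α (v - G (ContinuousLinearMap.adjoint G w))‖ < ε / 2 := by
    rw [norm_smul, Real.norm_eq_abs, abs_of_pos hαpos]
    refine lt_of_le_of_lt (hres _) ?_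
    rwa [← norm_neg, neg_sub]
  have h2 : ‖α • R α (G (ContinuousLinearMap.adjoint G w))‖ < ε / 2 := by
    rw [hRQ, smul_sub]
    refine lt_of_le_of_lt (norm_sub_le _ _) ?_
    have ha : ‖α • w‖ = α * ‖w‖ := by
      rw [norm_smul, Real.norm_eq_abs, abs_of_pos hαpos]
    have hb : ‖α • (α • R α w)‖ ≤ α * ‖w‖ := by
      rw [norm_smul, Real.norm_eq_abs, abs_of_pos hαpos, norm_smul, Real.norm_eq_abs,
        abs_of_pos hαpos]
      have := hres w
      nlinarith [norm_nonneg (R α w)]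
    rw [ha]
    linarith
  calc ‖α • R α v‖ ≤ ‖α • R α (v - G (ContinuousLinearMap.adjoint G w))‖
        + ‖α • R α (G (ContinuousLinearMap.adjoint G w))‖ := by
        rw [hsplit]; exact norm_add_le _ _
    _ < ε / 2 + ε / 2 := add_lt_add h1 h2
    _ = ε := by ring

end Aux

/-- Triangle-inequality argument for the main theorem: if for each
0 < δ < τ the controllability map G_δ has dense range, (αI + Q_δ)⁻¹ = R δ α,
y^{δ,α}(τ) = T(δ) z(τ−δ) + G_δ u_α with u_α = G_δ*(αI+Q_δ)⁻¹(z₁ − T(δ)z(τ−δ)),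
and ‖z^{δ,α}(τ) − y^{δ,α}(τ)‖ ≤ δ·C uniformly in α, then for every ε > 0 there are
δ > 0 and α > 0 with ‖z^{δ,α}(τ) − z₁‖ < ε. -/
theorem approximate_controllability_abstract
    {H Z : Type*} [NormedAddCommGroup H] [InnerProductSpace ℝ H] [CompleteSpace H]
    [NormedAddCommGroup Z] [InnerProductSpace ℝ Z] [CompleteSpace Z]
    (T : ℝ → Z →L[ℝ] Z) (τ : ℝ) (hτ : 0 < τ)
    (Gop : ℝ → H →L[ℝ] Z)
    (hdense : ∀ δ ∈ Set.Ioo (0 : ℝ) τ, DenseRange (Gop δ))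
    (R : ℝ → ℝ → Z →L[ℝ] Z)
    (hR : ∀ δ ∈ Set.Ioo (0 : ℝ) τ, ∀ α : ℝ, 0 < α →
      (R δ α) ∘L (α • (1 : Z →L[ℝ] Z) + Gop δ ∘L ContinuousLinearMap.adjoint (Gop δ)) = 1 ∧
      (α • (1 : Z →L[ℝ] Z) + Gop δ ∘L ContinuousLinearMap.adjoint (Gop δ)) ∘L (R δ α) = 1)
    (z : ℝ → Z) (z₁ : Z) (zsol : ℝ → ℝ → Z) (C : ℝ)
    (hbound : ∀ δ ∈ Set.Ioo (0 : ℝ) τ, ∀ α : ℝ, 0 < α →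
      ‖zsol δ α -
        (T δ (z (τ - δ)) +
          Gop δ (ContinuousLinearMap.adjoint (Gop δ)
            (R δ α (z₁ - T δ (z (τ - δ))))))‖ ≤ δ * C) :
    ∀ ε : ℝ, 0 < ε → ∃ δ > (0 : ℝ), ∃ α > (0 : ℝ), ‖zsol δ α - z₁‖ < ε := by
  intro ε hε
  obtain ⟨δ, hδpos, hδτ, hδC⟩ : ∃ δ : ℝ, 0 < δ ∧ δ < τ ∧ δ * C < ε / 2 := by
    refine ⟨min (τ / 2) (ε / (2 * (|C| + 1))), lt_min (by linarith) (by positivity),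
      lt_of_le_of_lt (min_le_left _ _) (by linarith), ?_⟩
    have h1 : min (τ / 2) (ε / (2 * (|C| + 1))) ≤ ε / (2 * (|C| + 1)) := min_le_right _ _
    have hδ0 : 0 < min (τ / 2) (ε / (2 * (|C| + 1))) := lt_min (by linarith) (by positivity)
    have h2 : min (τ / 2) (ε / (2 * (|C| + 1))) * C
        ≤ (ε / (2 * (|C| + 1))) * |C| := by
      calc min (τ / 2) (ε / (2 * (|C| + 1))) * C
          ≤ min (τ / 2) (ε / (2 * (|C| + 1))) * |C| :=
            mul_le_mul_of_nonneg_left (le_abs_self C) hδ0.le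
        _ ≤ (ε / (2 * (|C| + 1))) * |C| := mul_le_mul_of_nonneg_right h1 (abs_nonneg C)
    have h3 : (ε / (2 * (|C| + 1))) * |C| < ε / 2 := by
      rw [div_mul_eq_mul_div, div_lt_div_iff₀ (by positivity) (by norm_num)]
      nlinarith [abs_nonneg C]
    linarith
  have hδmem : δ ∈ Set.Ioo (0 : ℝ) τ := ⟨hδpos, hδτ⟩
  obtain ⟨α, hαpos, hαsmall⟩ :=
    key_convergence (Gop δ) (hdense δ hδmem) (R δ)
      (fun α hα => hR δ hδmem α hα) (z₁ - T δ (z (τ - δ))) (ε / 2) (by positivity)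
  refine ⟨δ, hδpos, α, hαpos, ?_⟩
  have hb := hbound δ hδmem α hαpos
  have htri : ‖zsol δ α - z₁‖ ≤
      ‖zsol δ α - (T δ (z (τ - δ)) +
        Gop δ (ContinuousLinearMap.adjoint (Gop δ) (R δ α (z₁ - T δ (z (τ - δ))))))‖
      + ‖(T δ (z (τ - δ)) +
        Gop δ (ContinuousLinearMap.adjoint (Gop δ) (R δ α (z₁ - T δ (z (τ - δ)))))) - z₁‖ :=
    norm_sub_le_norm_sub_add_norm_sub _ _ _
  have heq : (T δ (z (τ - δ)) +
        Gop δ (ContinuousLinearMap.adjoint (Gop δ) (R δ α (z₁ - T δ (z (τ - δ)))))) - z₁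
      = Gop δ (ContinuousLinearMap.adjoint (Gop δ) (R δ α (z₁ - T δ (z (τ - δ)))))
        - (z₁ - T δ (z (τ - δ))) := by abel
  rw [heq] at htri
  calc ‖zsol δ α - z₁‖ ≤ _ + _ := htri
    _ < ε / 2 + ε / 2 := add_lt_add_of_le_of_lt (le_trans hb hδC.le) hαsmall
    _ = ε := by ring
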